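/- Let A = [[−1,0],[1,0]] and B = (1,0)ᵀ (Ornstein–Uhlenbeck process paired with its area). Then for all ε > 0 and r ∈ ℝ, exp(εrA) = [[e^{−εr}, 0],[1−e^{−εr}, 1]]; for all ε > 0 and t ∈ [0,1], Γ_1^ε is invertible and the matrix α_t^ε := exp(εtA) Γ_t^ε (Γ_1^ε)^{−1} exp(−εA) has entries (α_t^ε)_{11} = (1−e^{−εt})((ε−1)e^{ε(1+t)} + e^{εt} + (ε+1)e^{ε} − e^{2ε}) / ((e^{ε}−1)((ε−2)e^{ε}+ε+2)), (α_t^ε)_{12} = (e^{−ε} − e^{−ε(1−t)} − e^{−εt} + 1) / ((ε+2)e^{−ε}+ε−2), (α_t^ε)_{21} = (e^{2ε} − 1 + (ε+1)e^{ε(1−t)} + e^{εt} + (ε−1)e^{ε(1+t)} − εt(e^{ε}−1)² − 2εe^{ε} − e^{ε(2−t)}) / ((e^{ε}−1)((ε−2)e^{ε}+ε+2)), and (α_t^ε)_{22} = (e^{−εt} − e^{−ε(1−t)} + (εt+1)e^{−ε} + εt − 1) / ((ε+2)e^{−ε}+ε−2). -/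

import Mathlib

open Matrix MeasureTheory

noncomputable section

/-- `Γ_t^ε = ∫₀ᵗ exp(−εsA) B B* exp(−εsA*) ds`, defined entrywise. -/
def Gamma {d m : ℕ} (A : Matrix (Fin d) (Fin d) ℝ) (B : Matrix (Fin d) (Fin m) ℝ)
    (ε t : ℝ) : Matrix (Fin d) (Fin d) ℝ :=
  Matrix.of fun i j => ∫ s in (0:ℝ)..t,
    (NormedSpace.exp ((-(ε * s)) • A) * B * Bᵀ * NormedSpace.exp ((-(ε * s)) • Aᵀ)) i j

/-- `α_t^ε = exp(εtA) Γ_t^ε (Γ_1^ε)⁻¹ exp(−εA)`. -/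
def alphaMat {d m : ℕ} (A : Matrix (Fin d) (Fin d) ℝ) (B : Matrix (Fin d) (Fin m) ℝ)
    (ε t : ℝ) : Matrix (Fin d) (Fin d) ℝ :=
  NormedSpace.exp ((ε * t) • A) * Gamma A B ε t * (Gamma A B ε 1)⁻¹ *
    NormedSpace.exp ((-ε) • A)

lemma diag2 (a b : ℝ) : (Matrix.diagonal ![a, b] : Matrix (Fin 2) (Fin 2) ℝ) = !![a, 0; 0, b] := by
  ext i j; fin_cases i <;> fin_cases j <;> simp [Matrix.diagonal_apply]

lemma Cinv : (!![1, 0; -1, 1] : Matrix (Fin 2) (Fin 2) ℝ)⁻¹ = !![1, 0; 1, 1] := by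
  rw [Matrix.inv_def]; simp [Matrix.adjugate_fin_two, Matrix.det_fin_two_of]

lemma expA (c : ℝ) :
    NormedSpace.exp (c • (!![-1, 0; 1, 0] : Matrix (Fin 2) (Fin 2) ℝ)) =
      !![Real.exp (-c), 0; 1 - Real.exp (-c), 1] := by
  have hU : IsUnit (!![1, 0; -1, 1] : Matrix (Fin 2) (Fin 2) ℝ) := by
    rw [Matrix.isUnit_iff_isUnit_det, Matrix.det_fin_two_of]; norm_num
  have hC : (c • (!![-1, 0; 1, 0] : Matrix (Fin 2) (Fin 2) ℝ)) =
      !![1, 0; -1, 1] * Matrix.diagonal ![-c, 0] * (!![1, 0; -1, 1] : Matrix (Fin 2) (Fin 2) ℝ)⁻¹ := by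
    rw [Cinv, diag2]
    ext i j
    fin_cases i <;> fin_cases j <;> simp [Matrix.mul_apply, Fin.sum_univ_two]
  rw [hC, Matrix.exp_conj _ _ hU, Matrix.exp_diagonal, Cinv]
  have hpi : NormedSpace.exp (![-c, 0] : Fin 2 → ℝ) = ![Real.exp (-c), 1] := by
    ext i
    fin_cases i <;> simp [Pi.coe_exp, ← Real.exp_eq_exp_ℝ]
  rw [hpi, diag2]
  ext i j
  fin_cases i <;> fin_cases j <;> simp [Matrix.mul_apply, Fin.sum_univ_two] <;> ring

lemma integrand_eq (ε s : ℝ) :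
    (NormedSpace.exp ((-(ε * s)) • (!![-1, 0; 1, 0] : Matrix (Fin 2) (Fin 2) ℝ)) *
      (!![1; 0] : Matrix (Fin 2) (Fin 1) ℝ) * (!![1; 0] : Matrix (Fin 2) (Fin 1) ℝ)ᵀ *
      NormedSpace.exp ((-(ε * s)) • (!![-1, 0; 1, 0] : Matrix (Fin 2) (Fin 2) ℝ)ᵀ)) =
      !![Real.exp (ε * s) * Real.exp (ε * s), Real.exp (ε * s) * (1 - Real.exp (ε * s));
         (1 - Real.exp (ε * s)) * Real.exp (ε * s), (1 - Real.exp (ε * s)) * (1 - Real.exp (ε * s))] := by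
  have h1 : ((-(ε * s)) • (!![-1, 0; 1, 0] : Matrix (Fin 2) (Fin 2) ℝ)ᵀ) =
      ((-(ε * s)) • (!![-1, 0; 1, 0] : Matrix (Fin 2) (Fin 2) ℝ))ᵀ := by
    rw [Matrix.transpose_smul]
  rw [h1, Matrix.exp_transpose, expA, neg_neg]
  ext i j
  fin_cases i <;> fin_cases j <;>
    norm_num [Matrix.mul_apply, Fin.sum_univ_two, Fin.sum_univ_one, Matrix.vecHead, Matrix.vecTail,
        Matrix.vecMul, dotProduct]

lemma intexp (c t : ℝ) (hc : c ≠ 0) :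
    ∫ s in (0:ℝ)..t, Real.exp (c * s) = (Real.exp (c * t) - 1) / c := by
  rw [intervalIntegral.integral_comp_mul_left Real.exp hc]
  simp [integral_exp, Real.exp_zero]
  ring

lemma intble (c : ℝ) {a b : ℝ} : IntervalIntegrable (fun s => Real.exp (c * s)) volume a b :=
  (Real.continuous_exp.comp (continuous_const.mul continuous_id)).intervalIntegrable _ _

lemma GammaVal (ε t : ℝ) (hε : ε ≠ 0) :
    Gamma !![-1, 0; 1, 0] (!![1; 0] : Matrix (Fin 2) (Fin 1) ℝ) ε t =
      !![(Real.exp (2 * ε * t) - 1) / (2 * ε),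
         (Real.exp (ε * t) - 1) / ε - (Real.exp (2 * ε * t) - 1) / (2 * ε);
         (Real.exp (ε * t) - 1) / ε - (Real.exp (2 * ε * t) - 1) / (2 * ε),
         t - 2 * ((Real.exp (ε * t) - 1) / ε) + (Real.exp (2 * ε * t) - 1) / (2 * ε)] := by
  have h2ε : (2 * ε) ≠ 0 := mul_ne_zero two_ne_zero hε
  have hexp2 : ∀ s : ℝ, Real.exp (ε * s) * Real.exp (ε * s) = Real.exp (2 * ε * s) := by
    intro s; rw [← Real.exp_add]; ring_nf
  ext i j
  fin_cases i <;> fin_cases j <;>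
    simp only [Gamma, Matrix.of_apply, integrand_eq, Fin.mk_zero, Fin.mk_one, Matrix.cons_val',
      Matrix.cons_val_zero, Matrix.cons_val_one, Matrix.head_cons, Matrix.empty_val',
      Matrix.cons_val_fin_one, Matrix.head_fin_const]
  · simp_rw [hexp2]; rw [intexp _ _ h2ε]
  · have : ∀ s : ℝ, Real.exp (ε * s) * (1 - Real.exp (ε * s))
        = Real.exp (ε * s) - Real.exp (2 * ε * s) := by
      intro s; rw [← hexp2 s]; ring
    simp_rw [this]
    rw [intervalIntegral.integral_sub (intble ε) (intble (2*ε)), intexp _ _ hε, intexp _ _ h2ε]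
  · have : ∀ s : ℝ, (1 - Real.exp (ε * s)) * Real.exp (ε * s)
        = Real.exp (ε * s) - Real.exp (2 * ε * s) := by
      intro s; rw [← hexp2 s]; ring
    simp_rw [this]
    rw [intervalIntegral.integral_sub (intble ε) (intble (2*ε)), intexp _ _ hε, intexp _ _ h2ε]
  · have : ∀ s : ℝ, (1 - Real.exp (ε * s)) * (1 - Real.exp (ε * s))
        = 1 - 2 * Real.exp (ε * s) + Real.exp (2 * ε * s) := by
      intro s; rw [← hexp2 s]; ring
    simp_rw [this]
    rw [intervalIntegral.integral_add (intervalIntegrable_const.sub ((intble ε).const_mul 2))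
        (intble (2 * ε)),
      intervalIntegral.integral_sub intervalIntegrable_const ((intble ε).const_mul 2),
      intervalIntegral.integral_const_mul, intexp _ _ hε, intexp _ _ h2ε,
      intervalIntegral.integral_const]
    norm_num

lemma f1pos (x : ℝ) (hx : 0 < x) : 0 < (x - 1) * Real.exp x + 1 := by
  have key : StrictMonoOn (fun y : ℝ => (y - 1) * Real.exp y + 1) (Set.Ici 0) := by
    apply strictMonoOn_of_deriv_pos (convex_Ici 0)
    · exact Continuous.continuousOn (by continuity)
    · intro y hy
      rw [interior_Ici] at hy
      have hd : HasDerivAt (fun y : ℝ => (y - 1) * Real.exp y + 1) (y * Real.exp y) y := by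
        have := (((hasDerivAt_id y).sub_const 1).mul (Real.hasDerivAt_exp y)).add_const 1
        exact this.congr_deriv (by simp only [id]; ring)
      rw [hd.deriv]
      have h1 := Real.exp_pos y
      have h2 : (0:ℝ) < y := hy
      positivity
  have h0 : ((0:ℝ) - 1) * Real.exp 0 + 1 = 0 := by simp
  have := key (Set.mem_Ici.2 le_rfl) (Set.mem_Ici.2 hx.le) hx
  simpa [h0] using this

lemma hpos (ε : ℝ) (hε : 0 < ε) : 0 < (ε - 2) * Real.exp ε + ε + 2 := by
  have key : StrictMonoOn (fun y : ℝ => (y - 2) * Real.exp y + y + 2) (Set.Ici 0) := by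
    apply strictMonoOn_of_deriv_pos (convex_Ici 0)
    · exact Continuous.continuousOn (by continuity)
    · intro y hy
      rw [interior_Ici] at hy
      have hd : HasDerivAt (fun y : ℝ => (y - 2) * Real.exp y + y + 2)
          ((y - 1) * Real.exp y + 1) y := by
        have := ((((hasDerivAt_id y).sub_const 2).mul (Real.hasDerivAt_exp y)).add
          (hasDerivAt_id y)).add_const 2
        exact this.congr_deriv (by simp only [id]; ring)
      rw [hd.deriv]
      exact f1pos y hy
  have h0 : ((0:ℝ) - 2) * Real.exp 0 + 0 + 2 = 0 := by simp
  have := key (Set.mem_Ici.2 le_rfl) (Set.mem_Ici.2 hε.le) hε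
  simpa [h0] using this

lemma smul2 (c a b d e : ℝ) : c • (!![a, b; d, e] : Matrix (Fin 2) (Fin 2) ℝ)
    = !![c * a, c * b; c * d, c * e] := by
  ext i j; fin_cases i <;> fin_cases j <;> simp

lemma invGamma (ε : ℝ) (hε : 0 < ε) :
    (Gamma !![-1, 0; 1, 0] (!![1; 0] : Matrix (Fin 2) (Fin 1) ℝ) ε 1)⁻¹ =
      ((2 * ε ^ 2) / ((Real.exp ε - 1) * ((ε - 2) * Real.exp ε + ε + 2))) •
        !![1 - 2 * ((Real.exp ε - 1) / ε) + (Real.exp (2 * ε) - 1) / (2 * ε),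
           -((Real.exp ε - 1) / ε - (Real.exp (2 * ε) - 1) / (2 * ε));
           -((Real.exp ε - 1) / ε - (Real.exp (2 * ε) - 1) / (2 * ε)),
           (Real.exp (2 * ε) - 1) / (2 * ε)] := by
  have hεne := hε.ne'
  have hEpos := Real.exp_pos ε
  have hE1 : Real.exp ε - 1 ≠ 0 := by
    have : (1:ℝ) < Real.exp ε := Real.one_lt_exp_iff.mpr hε
    linarith
  have hh := (hpos ε hε).ne'
  have hh' : Real.exp ε * (ε - 2) + ε + 2 ≠ 0 := by rw [mul_comm]; exact hh
  have e2 : Real.exp (2 * ε) = Real.exp ε * Real.exp ε := by rw [← Real.exp_add]; ring_nf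
  apply Matrix.inv_eq_right_inv
  rw [GammaVal ε 1 hεne]
  ext i j
  fin_cases i <;> fin_cases j <;>
    simp [Matrix.mul_apply, Fin.sum_univ_two, Matrix.smul_apply, Matrix.one_apply,
      smul_eq_mul] <;>
    simp only [e2] <;> field_simp <;> ring

set_option maxHeartbeats 4000000 in
/-- Explicit formulas for the Ornstein–Uhlenbeck process paired with its area:
`A = [[−1,0],[1,0]]`, `B = (1,0)ᵀ`. -/
theorem ou_area_explicit :
    ∀ ε : ℝ, 0 < ε →
      (∀ r : ℝ,
        NormedSpace.exp ((ε * r) • (!![-1, 0; 1, 0] : Matrix (Fin 2) (Fin 2) ℝ)) =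
          !![Real.exp (-(ε * r)), 0; 1 - Real.exp (-(ε * r)), 1]) ∧
      IsUnit (Gamma !![-1, 0; 1, 0] (!![1; 0] : Matrix (Fin 2) (Fin 1) ℝ) ε 1) ∧
      ∀ t : ℝ, t ∈ Set.Icc (0:ℝ) 1 →
        alphaMat !![-1, 0; 1, 0] (!![1; 0] : Matrix (Fin 2) (Fin 1) ℝ) ε t 0 0 =
          (1 - Real.exp (-(ε * t))) *
              ((ε - 1) * Real.exp (ε * (1 + t)) + Real.exp (ε * t) +
                (ε + 1) * Real.exp ε - Real.exp (2 * ε)) /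
            ((Real.exp ε - 1) * ((ε - 2) * Real.exp ε + ε + 2)) ∧
        alphaMat !![-1, 0; 1, 0] (!![1; 0] : Matrix (Fin 2) (Fin 1) ℝ) ε t 0 1 =
          (Real.exp (-ε) - Real.exp (-(ε * (1 - t))) - Real.exp (-(ε * t)) + 1) /
            ((ε + 2) * Real.exp (-ε) + ε - 2) ∧
        alphaMat !![-1, 0; 1, 0] (!![1; 0] : Matrix (Fin 2) (Fin 1) ℝ) ε t 1 0 =
          (Real.exp (2 * ε) - 1 + (ε + 1) * Real.exp (ε * (1 - t)) + Real.exp (ε * t) +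
              (ε - 1) * Real.exp (ε * (1 + t)) - ε * t * (Real.exp ε - 1) ^ 2 -
              2 * ε * Real.exp ε - Real.exp (ε * (2 - t))) /
            ((Real.exp ε - 1) * ((ε - 2) * Real.exp ε + ε + 2)) ∧
        alphaMat !![-1, 0; 1, 0] (!![1; 0] : Matrix (Fin 2) (Fin 1) ℝ) ε t 1 1 =
          (Real.exp (-(ε * t)) - Real.exp (-(ε * (1 - t))) + (ε * t + 1) * Real.exp (-ε) +
              ε * t - 1) /
            ((ε + 2) * Real.exp (-ε) + ε - 2) := by
  intro ε hε
  have hεne := hε.ne'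
  have hEpos := Real.exp_pos ε
  have hE1 : Real.exp ε - 1 ≠ 0 := by
    have : (1:ℝ) < Real.exp ε := Real.one_lt_exp_iff.mpr hε
    linarith
  have hh := (hpos ε hε).ne'
  refine ⟨fun r => expA (ε * r), ?_, ?_⟩
  · rw [Matrix.isUnit_iff_isUnit_det, GammaVal ε 1 hεne, Matrix.det_fin_two_of,
      isUnit_iff_ne_zero]
    have e2 : Real.exp (2 * ε * 1) = Real.exp ε * Real.exp ε := by rw [← Real.exp_add]; ring_nf
    have hdet : (Real.exp (2 * ε * 1) - 1) / (2 * ε) *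
        (1 - 2 * ((Real.exp (ε * 1) - 1) / ε) + (Real.exp (2 * ε * 1) - 1) / (2 * ε)) -
        ((Real.exp (ε * 1) - 1) / ε - (Real.exp (2 * ε * 1) - 1) / (2 * ε)) *
        ((Real.exp (ε * 1) - 1) / ε - (Real.exp (2 * ε * 1) - 1) / (2 * ε)) =
        (Real.exp ε - 1) * ((ε - 2) * Real.exp ε + ε + 2) / (2 * ε ^ 2) := by
      rw [e2, mul_one]
      field_simp
      ring
    rw [hdet]
    exact div_ne_zero (mul_ne_zero hE1 hh) (by positivity)
  · intro t _
    have hFpos := Real.exp_pos (ε * t)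
    have hFne := hFpos.ne'
    have hEne := hEpos.ne'
    have e2 : Real.exp (2 * ε) = Real.exp ε * Real.exp ε := by rw [← Real.exp_add]; ring_nf
    have e2t : Real.exp (2 * ε * t) = Real.exp (ε * t) * Real.exp (ε * t) := by
      rw [← Real.exp_add]; ring_nf
    have et' : Real.exp (-(ε * t)) = (Real.exp (ε * t))⁻¹ := Real.exp_neg _
    have eε' : Real.exp (-ε) = (Real.exp ε)⁻¹ := Real.exp_neg _
    have e1pt : Real.exp (ε * (1 + t)) = Real.exp ε * Real.exp (ε * t) := by
      rw [← Real.exp_add]; ring_nf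
    have e1mt : Real.exp (ε * (1 - t)) = Real.exp ε / Real.exp (ε * t) := by
      rw [← Real.exp_sub]; ring_nf
    have e1mt' : Real.exp (-(ε * (1 - t))) = Real.exp (ε * t) / Real.exp ε := by
      rw [← Real.exp_sub]; ring_nf
    have e2mt : Real.exp (ε * (2 - t)) = Real.exp ε * Real.exp ε / Real.exp (ε * t) := by
      rw [← e2, ← Real.exp_sub]; ring_nf
    have hden : (ε + 2) * (Real.exp ε)⁻¹ + ε - 2
        = ((ε - 2) * Real.exp ε + ε + 2) / Real.exp ε := by
      field_simp; ring
    have hexpεt : NormedSpace.exp ((-ε) • (!![-1, 0; 1, 0] : Matrix (Fin 2) (Fin 2) ℝ)) =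
        !![Real.exp ε, 0; 1 - Real.exp ε, 1] := by
      rw [expA (-ε), neg_neg]
    have key : alphaMat !![-1, 0; 1, 0] (!![1; 0] : Matrix (Fin 2) (Fin 1) ℝ) ε t =
        !![Real.exp (-(ε * t)), 0; 1 - Real.exp (-(ε * t)), 1] *
          !![(Real.exp (2 * ε * t) - 1) / (2 * ε),
             (Real.exp (ε * t) - 1) / ε - (Real.exp (2 * ε * t) - 1) / (2 * ε);
             (Real.exp (ε * t) - 1) / ε - (Real.exp (2 * ε * t) - 1) / (2 * ε),
             t - 2 * ((Real.exp (ε * t) - 1) / ε) + (Real.exp (2 * ε * t) - 1) / (2 * ε)] *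
          ((2 * ε ^ 2 / ((Real.exp ε - 1) * ((ε - 2) * Real.exp ε + ε + 2))) •
            !![1 - 2 * ((Real.exp ε - 1) / ε) + (Real.exp (2 * ε) - 1) / (2 * ε),
               -((Real.exp ε - 1) / ε - (Real.exp (2 * ε) - 1) / (2 * ε));
               -((Real.exp ε - 1) / ε - (Real.exp (2 * ε) - 1) / (2 * ε)),
               (Real.exp (2 * ε) - 1) / (2 * ε)]) *
          !![Real.exp ε, 0; 1 - Real.exp ε, 1] := by
      rw [alphaMat, expA (ε * t), GammaVal ε t hεne, invGamma ε hε, hexpεt]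
    rw [smul2, Matrix.mul_fin_two, Matrix.mul_fin_two, Matrix.mul_fin_two] at key
    refine ⟨?_, ?_, ?_, ?_⟩ <;>
      (rw [key]
       simp only [Matrix.of_apply, Matrix.cons_val', Matrix.cons_val_zero, Matrix.cons_val_one,
         Matrix.head_cons, Matrix.empty_val', Matrix.cons_val_fin_one, Matrix.head_fin_const]
       simp only [e2, e2t, et', eε', e1pt, e1mt, e1mt', e2mt, hden]
       field_simp
       ring)
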